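/- Let A be a Hermitian d×d complex matrix whose largest eigenvalue is λ_max = 1 and whose smallest eigenvalue is λ_min ≥ −1, and set λ̄ = (λ_min + λ_max)/2 and Ã = (A − λ̄·I)/(1 − λ̄) (assuming λ_min < 1). Suppose c > 0 and c·A = c₀·B₀ + c₁·B₁ where B₀, B₁ are Hermitian with ‖B₀‖, ‖B₁‖ ≤ 1, c₀, c₁ > 0, and c₀ + c₁ > c (a strictly norm-increasing sub-decomposition). Then there exists a unit vector ψ in ℂ^d such that c·(1 − λ̄)·√(1 − ⟨ψ, Ã ψ⟩²) < c₀·√(1 − ⟨ψ, B₀ ψ⟩²) + c₁·√(1 − ⟨ψ, B₁ ψ⟩²). -/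

import Mathlib

open scoped Matrix Matrix.Norms.L2Operator

/-- The expectation value `⟨ψ, A ψ⟩` (real part) of a matrix `A` on a vector `ψ`. -/
noncomputable def expval {d : ℕ} (A : Matrix (Fin d) (Fin d) ℂ) (ψ : Fin d → ℂ) : ℝ :=
  (star ψ ⬝ᵥ A.mulVec ψ).re

open scoped ComplexInnerProductSpace in
lemma aux_unit_norm {d : ℕ} {ψ : Fin d → ℂ} (h : star ψ ⬝ᵥ ψ = 1) :
    ‖(EuclideanSpace.equiv (Fin d) ℂ).symm ψ‖ = 1 := by
  set u := (EuclideanSpace.equiv (Fin d) ℂ).symm ψ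
  have h1 : ⟪u, u⟫ = 1 := by
    rw [EuclideanSpace.inner_eq_star_dotProduct, dotProduct_comm]; exact h
  have h2 : ⟪u, u⟫ = (‖u‖ : ℂ) ^ 2 := inner_self_eq_norm_sq_to_K u
  have h3 : (‖u‖ : ℂ) ^ 2 = 1 := by rw [← h2, h1]
  have h4 : (‖u‖ : ℝ) ^ 2 = 1 := by exact_mod_cast h3
  nlinarith [norm_nonneg u]

open scoped ComplexInnerProductSpace in
lemma aux_expval_abs_le {d : ℕ} {B : Matrix (Fin d) (Fin d) ℂ} (hBn : ‖B‖ ≤ 1)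
    {ψ : Fin d → ℂ} (hψ : star ψ ⬝ᵥ ψ = 1) : |expval B ψ| ≤ 1 := by
  set u := (EuclideanSpace.equiv (Fin d) ℂ).symm ψ
  set v := (EuclideanSpace.equiv (Fin d) ℂ).symm (B.mulVec ψ)
  have hiv : ⟪u, v⟫ = star ψ ⬝ᵥ B.mulVec ψ := by
    rw [EuclideanSpace.inner_eq_star_dotProduct, dotProduct_comm]; rfl
  have hu : ‖u‖ = 1 := aux_unit_norm hψ
  have hv : ‖v‖ ≤ 1 := by
    calc ‖v‖ ≤ ‖B‖ * ‖u‖ := B.l2_opNorm_mulVec u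
    _ ≤ 1 := by rw [hu]; linarith
  have habs : |(star ψ ⬝ᵥ B.mulVec ψ).re| ≤ ‖star ψ ⬝ᵥ B.mulVec ψ‖ := Complex.abs_re_le_norm _
  rw [← hiv] at habs
  calc |expval B ψ| = |(⟪u, v⟫).re| := by rw [hiv]; rfl
  _ ≤ ‖⟪u, v⟫‖ := habs
  _ ≤ ‖u‖ * ‖v‖ := norm_inner_le_norm u v
  _ ≤ 1 := by rw [hu]; linarith

open scoped ComplexInnerProductSpace in
lemma aux_mulVec_of_expval_one {d : ℕ} {B : Matrix (Fin d) (Fin d) ℂ} (hBn : ‖B‖ ≤ 1)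
    {ψ : Fin d → ℂ} (hψ : star ψ ⬝ᵥ ψ = 1) (h : expval B ψ = 1) : B.mulVec ψ = ψ := by
  set u := (EuclideanSpace.equiv (Fin d) ℂ).symm ψ with hu_def
  set v := (EuclideanSpace.equiv (Fin d) ℂ).symm (B.mulVec ψ) with hv_def
  have hu : ‖u‖ = 1 := aux_unit_norm hψ
  have hv : ‖v‖ ≤ 1 := by
    calc ‖v‖ ≤ ‖B‖ * ‖u‖ := B.l2_opNorm_mulVec u
    _ ≤ 1 := by rw [hu]; linarith
  have hre : RCLike.re (⟪v, u⟫ : ℂ) = 1 := by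
    rw [inner_re_symm]
    rw [EuclideanSpace.inner_eq_star_dotProduct, dotProduct_comm]; exact h
  have hns : ‖v - u‖ ^ 2 ≤ 0 := by
    have := norm_sub_sq (𝕜 := ℂ) v u
    rw [hre, hu] at this
    nlinarith [norm_nonneg v]
  have hvu : v = u := by
    have h0 : ‖v - u‖ = 0 := by nlinarith [norm_nonneg (v - u), sq_nonneg ‖v - u‖]
    exact sub_eq_zero.mp (norm_eq_zero.mp h0)
  exact congrArg (EuclideanSpace.equiv (Fin d) ℂ) hvu

lemma aux_mulVec_of_expval_neg_one {d : ℕ} {B : Matrix (Fin d) (Fin d) ℂ} (hBn : ‖B‖ ≤ 1)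
    {ψ : Fin d → ℂ} (hψ : star ψ ⬝ᵥ ψ = 1) (h : expval B ψ = -1) : B.mulVec ψ = -ψ := by
  have hn : ‖(-B : Matrix (Fin d) (Fin d) ℂ)‖ ≤ 1 := by rwa [norm_neg]
  have he : expval (-B) ψ = 1 := by
    simp only [expval, Matrix.neg_mulVec, dotProduct_neg, Complex.neg_re] at h ⊢
    linarith
  have := aux_mulVec_of_expval_one hn hψ he
  rw [Matrix.neg_mulVec] at this
  rw [← neg_neg (B.mulVec ψ), this]

lemma aux_expval_smul {d : ℕ} (r : ℝ) (M : Matrix (Fin d) (Fin d) ℂ) (ψ : Fin d → ℂ) :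
    expval (r • M) ψ = r * expval M ψ := by
  simp [expval, Matrix.smul_mulVec, dotProduct_smul, Complex.real_smul]

lemma aux_expval_add {d : ℕ} (M N : Matrix (Fin d) (Fin d) ℂ) (ψ : Fin d → ℂ) :
    expval (M + N) ψ = expval M ψ + expval N ψ := by
  simp [expval, Matrix.add_mulVec, dotProduct_add]

lemma aux_expval_sub {d : ℕ} (M N : Matrix (Fin d) (Fin d) ℂ) (ψ : Fin d → ℂ) :
    expval (M - N) ψ = expval M ψ - expval N ψ := by
  simp [expval, Matrix.sub_mulVec, dotProduct_sub]

lemma aux_expval_one {d : ℕ} {ψ : Fin d → ℂ} (h : star ψ ⬝ᵥ ψ = 1) :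
    expval (1 : Matrix (Fin d) (Fin d) ℂ) ψ = 1 := by
  simp [expval, Matrix.one_mulVec, h]

lemma aux_expval_eig {d : ℕ} {M : Matrix (Fin d) (Fin d) ℂ} {ψ : Fin d → ℂ} {s : ℝ}
    (h : M.mulVec ψ = s • ψ) (hψ : star ψ ⬝ᵥ ψ = 1) : expval M ψ = s := by
  simp [expval, h, dotProduct_smul, Complex.real_smul, hψ]

lemma aux_sq1 {x : ℝ} (h : x ^ 2 = 1) : x = 1 ∨ x = -1 := by
  have : (x - 1) * (x + 1) = 0 := by nlinarith
  rcases mul_eq_zero.mp this with h | h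
  · left; linarith
  · right; linarith

theorem stmt_3 {d : ℕ} (A : Matrix (Fin d) (Fin d) ℂ) (hA : A.IsHermitian)
    (lmin : ℝ)
    (hmax : IsGreatest (Set.range hA.eigenvalues) 1)
    (hmin : IsLeast (Set.range hA.eigenvalues) lmin)
    (hge : -1 ≤ lmin) (hlt : lmin < 1)
    (lbar : ℝ) (hlbar : lbar = (lmin + 1) / 2)
    (Atil : Matrix (Fin d) (Fin d) ℂ)
    (hAtil : Atil = (1 - lbar)⁻¹ • (A - lbar • (1 : Matrix (Fin d) (Fin d) ℂ)))
    (c c₀ c₁ : ℝ) (hc : 0 < c) (hc₀ : 0 < c₀) (hc₁ : 0 < c₁)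
    (B₀ B₁ : Matrix (Fin d) (Fin d) ℂ)
    (hB₀ : B₀.IsHermitian) (hB₁ : B₁.IsHermitian)
    (hB₀n : ‖B₀‖ ≤ 1) (hB₁n : ‖B₁‖ ≤ 1)
    (hsplit : c • A = c₀ • B₀ + c₁ • B₁)
    (hinc : c < c₀ + c₁) :
    ∃ ψ : Fin d → ℂ, star ψ ⬝ᵥ ψ = 1 ∧
      c * (1 - lbar) * Real.sqrt (1 - expval Atil ψ ^ 2)
        < c₀ * Real.sqrt (1 - expval B₀ ψ ^ 2) + c₁ * Real.sqrt (1 - expval B₁ ψ ^ 2) := by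
  obtain ⟨imax, hmax1⟩ := hmax.1
  obtain ⟨imin, hmin1⟩ := hmin.1
  have hne : imax ≠ imin := by
    intro h
    rw [h, hmin1] at hmax1
    linarith
  set ψM : Fin d → ℂ := ⇑(hA.eigenvectorBasis imax) with hψM_def
  set ψm : Fin d → ℂ := ⇑(hA.eigenvectorBasis imin) with hψm_def
  have hortho := orthonormal_iff_ite.mp hA.eigenvectorBasis.orthonormal
  have hMM : star ψM ⬝ᵥ ψM = 1 := by
    have h := hortho imax imax
    rw [EuclideanSpace.inner_eq_star_dotProduct, dotProduct_comm, if_pos rfl] at h; exact h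
  have hmm : star ψm ⬝ᵥ ψm = 1 := by
    have h := hortho imin imin
    rw [EuclideanSpace.inner_eq_star_dotProduct, dotProduct_comm, if_pos rfl] at h; exact h
  have hMm : star ψM ⬝ᵥ ψm = 0 := by
    have h := hortho imax imin
    rw [EuclideanSpace.inner_eq_star_dotProduct, dotProduct_comm, if_neg hne] at h; exact h
  have hmM : star ψm ⬝ᵥ ψM = 0 := by
    have h := hortho imin imax
    rw [EuclideanSpace.inner_eq_star_dotProduct, dotProduct_comm, if_neg hne.symm] at h; exact h
  -- eigen equations
  have heigM : A.mulVec ψM = (1 : ℝ) • ψM := by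
    have := hA.mulVec_eigenvectorBasis imax
    rwa [hmax1] at this
  have heigm : A.mulVec ψm = lmin • ψm := by
    have := hA.mulVec_eigenvectorBasis imin
    rwa [hmin1] at this
  have hAM : expval A ψM = 1 := aux_expval_eig heigM hMM
  have hAm : expval A ψm = lmin := aux_expval_eig heigm hmm
  have hlbar1 : (0 : ℝ) < 1 - lbar := by rw [hlbar]; linarith
  have hAtilval : ∀ ψ : Fin d → ℂ, star ψ ⬝ᵥ ψ = 1 →
      expval Atil ψ = (1 - lbar)⁻¹ * (expval A ψ - lbar) := by
    intro ψ hψ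
    rw [hAtil, aux_expval_smul, aux_expval_sub, aux_expval_smul, aux_expval_one hψ, mul_one]
  have hAtilM : expval Atil ψM = 1 := by
    rw [hAtilval ψM hMM, hAM]
    field_simp
  have hAtilm : expval Atil ψm = -1 := by
    rw [hAtilval ψm hmm, hAm, hlbar]
    rw [show lmin - (lmin + 1) / 2 = -((1 : ℝ) - (lmin + 1) / 2) by ring]
    rw [← hlbar]
    field_simp
  have hsplitval : ∀ ψ : Fin d → ℂ,
      c * expval A ψ = c₀ * expval B₀ ψ + c₁ * expval B₁ ψ := by
    intro ψ
    have := congrArg (fun M => expval M ψ) hsplit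
    simpa [aux_expval_smul, aux_expval_add] using this
  -- the "easy win" at an extreme eigenvector
  have easy : ∀ ψ : Fin d → ℂ, star ψ ⬝ᵥ ψ = 1 → expval Atil ψ ^ 2 = 1 →
      (expval B₀ ψ ^ 2 < 1 ∨ expval B₁ ψ ^ 2 < 1) →
      c * (1 - lbar) * Real.sqrt (1 - expval Atil ψ ^ 2)
        < c₀ * Real.sqrt (1 - expval B₀ ψ ^ 2) + c₁ * Real.sqrt (1 - expval B₁ ψ ^ 2) := by
    intro ψ hψ hAt hB
    rw [hAt, sub_self, Real.sqrt_zero, mul_zero]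
    have t0 : 0 ≤ c₀ * Real.sqrt (1 - expval B₀ ψ ^ 2) :=
      mul_nonneg hc₀.le (Real.sqrt_nonneg _)
    have t1 : 0 ≤ c₁ * Real.sqrt (1 - expval B₁ ψ ^ 2) :=
      mul_nonneg hc₁.le (Real.sqrt_nonneg _)
    rcases hB with h | h
    · have hs : 0 < Real.sqrt (1 - expval B₀ ψ ^ 2) := Real.sqrt_pos.mpr (by linarith)
      nlinarith
    · have hs : 0 < Real.sqrt (1 - expval B₁ ψ ^ 2) := Real.sqrt_pos.mpr (by linarith)
      nlinarith
  have hAtM2 : expval Atil ψM ^ 2 = 1 := by rw [hAtilM]; ring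
  have hAtm2 : expval Atil ψm ^ 2 = 1 := by rw [hAtilm]; ring
  by_cases hM0 : expval B₀ ψM ^ 2 < 1
  · exact ⟨ψM, hMM, easy ψM hMM hAtM2 (Or.inl hM0)⟩
  by_cases hM1 : expval B₁ ψM ^ 2 < 1
  · exact ⟨ψM, hMM, easy ψM hMM hAtM2 (Or.inr hM1)⟩
  by_cases hm0 : expval B₀ ψm ^ 2 < 1
  · exact ⟨ψm, hmm, easy ψm hmm hAtm2 (Or.inl hm0)⟩
  by_cases hm1 : expval B₁ ψm ^ 2 < 1
  · exact ⟨ψm, hmm, easy ψm hmm hAtm2 (Or.inr hm1)⟩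
  -- all four expectation values are ±1
  have sqle : ∀ (B : Matrix (Fin d) (Fin d) ℂ), ‖B‖ ≤ 1 → ∀ ψ : Fin d → ℂ,
      star ψ ⬝ᵥ ψ = 1 → expval B ψ ^ 2 ≤ 1 := by
    intro B hBn ψ hψ
    have := aux_expval_abs_le hBn hψ
    have h2 := abs_le.mp this
    nlinarith [h2.1, h2.2]
  have eM0 : expval B₀ ψM = 1 ∨ expval B₀ ψM = -1 :=
    aux_sq1 (le_antisymm (sqle B₀ hB₀n ψM hMM) (not_lt.mp hM0))
  have eM1 : expval B₁ ψM = 1 ∨ expval B₁ ψM = -1 :=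
    aux_sq1 (le_antisymm (sqle B₁ hB₁n ψM hMM) (not_lt.mp hM1))
  have em0 : expval B₀ ψm = 1 ∨ expval B₀ ψm = -1 :=
    aux_sq1 (le_antisymm (sqle B₀ hB₀n ψm hmm) (not_lt.mp hm0))
  have em1 : expval B₁ ψm = 1 ∨ expval B₁ ψm = -1 :=
    aux_sq1 (le_antisymm (sqle B₁ hB₁n ψm hmm) (not_lt.mp hm1))
  have relM : c = c₀ * expval B₀ ψM + c₁ * expval B₁ ψM := by
    have := hsplitval ψM; rwa [hAM, mul_one] at this
  have relm : c * lmin = c₀ * expval B₀ ψm + c₁ * expval B₁ ψm := by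
    have := hsplitval ψm; rwa [hAm] at this
  -- mixed-state construction (the hard case)
  have mixed : ∀ s0 s1 : ℝ, B₀.mulVec ψM = s0 • ψM → B₀.mulVec ψm = (-s0) • ψm →
      B₁.mulVec ψM = s1 • ψM → B₁.mulVec ψm = (-s1) • ψm → lmin = -1 →
      ∃ ψ : Fin d → ℂ, star ψ ⬝ᵥ ψ = 1 ∧
        c * (1 - lbar) * Real.sqrt (1 - expval Atil ψ ^ 2)
          < c₀ * Real.sqrt (1 - expval B₀ ψ ^ 2) + c₁ * Real.sqrt (1 - expval B₁ ψ ^ 2) := by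
    intro s0 s1 h0M h0m h1M h1m hlm
    have hlb0 : lbar = 0 := by rw [hlbar, hlm]; ring
    have hAtilA : Atil = A := by
      rw [hAtil, hlb0]
      simp
    set r : ℂ := (((Real.sqrt 2)⁻¹ : ℝ) : ℂ) with hr_def
    have hhalf : ((Real.sqrt 2)⁻¹ * (Real.sqrt 2)⁻¹ : ℝ) = 1 / 2 := by
      rw [← mul_inv, Real.mul_self_sqrt (by norm_num : (0:ℝ) ≤ 2)]
      norm_num
    have hrr : (starRingEnd ℂ) r * r = ((1 / 2 : ℝ) : ℂ) := by
      rw [hr_def, Complex.conj_ofReal, ← Complex.ofReal_mul, hhalf]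
    set ψ : Fin d → ℂ := r • (ψM + ψm) with hψ_def
    have hstarψ : star ψ = (starRingEnd ℂ) r • (star ψM + star ψm) := by
      rw [hψ_def, star_smul, star_add]
      rfl
    have hdot : ∀ v w : Fin d → ℂ,
        star ψ ⬝ᵥ (r • (v + w)) = (starRingEnd ℂ r * r) *
          ((star ψM ⬝ᵥ v) + (star ψM ⬝ᵥ w) + (star ψm ⬝ᵥ v) + (star ψm ⬝ᵥ w)) := by
      intro v w
      rw [hstarψ]
      simp only [smul_dotProduct, dotProduct_smul, add_dotProduct,
        dotProduct_add, smul_eq_mul]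
      ring
    have hunit : star ψ ⬝ᵥ ψ = 1 := by
      rw [hψ_def, hdot ψM ψm, hMM, hmm, hMm, hmM, hrr]
      norm_num
    -- expectation value of a matrix with opposite real eigenvalues a, -a on ψM, ψm
    have key : ∀ (M : Matrix (Fin d) (Fin d) ℂ) (a : ℝ), M.mulVec ψM = a • ψM →
        M.mulVec ψm = (-a) • ψm → expval M ψ = 0 := by
      intro M a hMa hma
      have hMψ : M.mulVec ψ = r • (a • ψM + (-a) • ψm) := by
        rw [hψ_def, Matrix.mulVec_smul, Matrix.mulVec_add, hMa, hma]
      rw [expval, hMψ, hdot (a • ψM) ((-a) • ψm)]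
      simp [dotProduct_smul, hMM, hmm, hMm, hmM, Complex.real_smul]
    have hkey0 : expval B₀ ψ = 0 := key B₀ s0 h0M h0m
    have hkey1 : expval B₁ ψ = 0 := key B₁ s1 h1M h1m
    have hkeyA : expval Atil ψ = 0 := by
      rw [hAtilA]
      refine key A 1 ?_ ?_
      · exact heigM
      · rw [show (-(1:ℝ)) = lmin by rw [hlm]]
        exact heigm
    refine ⟨ψ, hunit, ?_⟩
    rw [hkey0, hkey1, hkeyA, hlb0]
    norm_num
    linarith
  have hsp : ∀ v : Fin d → ℂ, ((1 : ℝ)) • v = v := fun v => by simp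
  have hsn : ∀ v : Fin d → ℂ, ((-1 : ℝ)) • v = -v := fun v => by
    rw [neg_smul]; simp
  have hA1 : c * lmin < c := by
    have := mul_lt_mul_of_pos_left hlt hc
    linarith
  have hA2 : -c ≤ c * lmin := by
    have h := mul_nonneg hc.le (show (0:ℝ) ≤ lmin + 1 by linarith)
    have h2 : c * (lmin + 1) = c * lmin + c := by ring
    linarith
  rcases eM0 with e1 | e1 <;> rcases eM1 with e2 | e2 <;>
    rcases em0 with e3 | e3 <;> rcases em1 with e4 | e4 <;>
    rw [e1, e2] at relM <;> rw [e3, e4] at relm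
  · exfalso; linarith
  · exfalso; linarith
  · exfalso; linarith
  · exfalso; linarith
  · exfalso; linarith
  · exfalso; linarith
  · -- eM0 = 1, eM1 = -1, em0 = -1, em1 = 1 : survivor
    have hlm : lmin = -1 := by
      have h : c * (lmin + 1) = 0 := by
        have h2 : c * (lmin + 1) = c * lmin + c := by ring
        linarith
      rcases mul_eq_zero.mp h with h' | h'
      · exfalso; linarith
      · linarith
    exact mixed 1 (-1)
      (by rw [hsp]; exact aux_mulVec_of_expval_one hB₀n hMM e1)
      (by rw [hsn]; exact aux_mulVec_of_expval_neg_one hB₀n hmm e3)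
      (by rw [hsn]; exact aux_mulVec_of_expval_neg_one hB₁n hMM e2)
      (by rw [neg_neg, hsp]; exact aux_mulVec_of_expval_one hB₁n hmm e4) hlm
  · exfalso; linarith
  · exfalso; linarith
  · -- eM0 = -1, eM1 = 1, em0 = 1, em1 = -1 : survivor
    have hlm : lmin = -1 := by
      have h : c * (lmin + 1) = 0 := by
        have h2 : c * (lmin + 1) = c * lmin + c := by ring
        linarith
      rcases mul_eq_zero.mp h with h' | h'
      · exfalso; linarith
      · linarith
    exact mixed (-1) 1
      (by rw [hsn]; exact aux_mulVec_of_expval_neg_one hB₀n hMM e1)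
      (by rw [neg_neg, hsp]; exact aux_mulVec_of_expval_one hB₀n hmm e3)
      (by rw [hsp]; exact aux_mulVec_of_expval_one hB₁n hMM e2)
      (by rw [hsn]; exact aux_mulVec_of_expval_neg_one hB₁n hmm e4) hlm
  · exfalso; linarith
  · exfalso; linarith
  · exfalso; linarith
  · exfalso; linarith
  · exfalso; linarith
  · exfalso; linarith
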